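/- Let C be a symmetric positive definite real n×n matrix and let π be a permutation of {1,…,n} such that C_{π(i)π(j)} = C_{ij} for all i, j. Let x ∈ ℝ^n be a vector with all entries positive and define y ∈ ℝ^n by y_i = x_{π(i)}. Then y^T C y = x^T C x and x^T C y ≤ x^T C x, with equality x^T C y = x^T C x if and only if y = x. -/

import Mathlib

open Matrix

/-- Let `C` be a symmetric positive definite real `n × n` matrix and `π` a
permutation of `{1,…,n}` with `C_{π i, π j} = C_{i j}` for all `i, j`.  Let `x ∈ ℝⁿ` have all
entries positive and let `y` be defined by `y i = x (π i)`.  Then `yᵀCy = xᵀCx` and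
`xᵀCy ≤ xᵀCx`, with equality `xᵀCy = xᵀCx` if and only if `y = x`. -/
theorem cartan_cauchy_schwarz_step
    {n : ℕ} (C : Matrix (Fin n) (Fin n) ℝ) (hsymm : C.IsSymm) (hpd : C.PosDef)
    (π : Equiv.Perm (Fin n)) (hπ : ∀ i j, C (π i) (π j) = C i j)
    (x : Fin n → ℝ) (hx : ∀ i, 0 < x i)
    (y : Fin n → ℝ) (hy : y = fun i => x (π i)) :
    y ⬝ᵥ C.mulVec y = x ⬝ᵥ C.mulVec x ∧
    x ⬝ᵥ C.mulVec y ≤ x ⬝ᵥ C.mulVec x ∧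
    (x ⬝ᵥ C.mulVec y = x ⬝ᵥ C.mulVec x ↔ y = x) := by
  have h1 : y ⬝ᵥ C.mulVec y = x ⬝ᵥ C.mulVec x := by
    subst hy
    simp only [dotProduct, mulVec, Finset.mul_sum]
    rw [← Equiv.sum_comp π (fun i => ∑ j, x i * (C i j * x j))]
    refine Finset.sum_congr rfl fun i _ => ?_
    rw [← Equiv.sum_comp π (fun j => x (π i) * (C (π i) j * x j))]
    simp [hπ]
  have hsym : y ⬝ᵥ C.mulVec x = x ⬝ᵥ C.mulVec y := by
    rw [dotProduct_mulVec, ← mulVec_transpose, hsymm.eq, dotProduct_comm]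
  have hexp : (x - y) ⬝ᵥ C.mulVec (x - y) = 2 * (x ⬝ᵥ C.mulVec x - x ⬝ᵥ C.mulVec y) := by
    rw [sub_dotProduct, mulVec_sub, dotProduct_sub, dotProduct_sub, h1, hsym]
    ring
  have hnonneg : 0 ≤ (x - y) ⬝ᵥ C.mulVec (x - y) := by
    rcases eq_or_ne (x - y) 0 with h | h
    · simp [h]
    · have := hpd.dotProduct_mulVec_pos h
      simpa using this.le
  rw [hexp] at hnonneg
  refine ⟨h1, by linarith, ?_⟩
  constructor
  · intro heq
    by_contra hne
    have := hpd.dotProduct_mulVec_pos (show x - y ≠ 0 from sub_ne_zero.mpr (fun h => hne h.symm))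
    simp only [RCLike.re_to_real, star_trivial] at this
    rw [hexp] at this
    linarith
  · intro heq
    subst heq
    rfl
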